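/- If the induced hyperspace system (K(X), T_K) is weakly mixing and disjoint from all minimal systems, then (X,T) is weakly mixing and disjoint from all minimal systems. Conversely, if (Xⁿ, T⁽ⁿ⁾) is disjoint from all minimal systems for every n ∈ ℕ, then both (K(X), T_K) and (M(X), T_M) are disjoint from all minimal systems. -/

import Mathlib

open MeasureTheory Topology Set Function TopologicalSpace

noncomputable section

namespace Paper

/-- The orbit closure of a point. -/
def orbitClosure {α : Type*} [TopologicalSpace α] (T : α → α) (x : α) : Set α :=
  closure (Set.range fun n : ℕ => T^[n] x)

/-- Topological transitivity: `N(U,V)` is infinite for all non-empty open `U, V`. -/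
def IsTransitive {α : Type*} [TopologicalSpace α] (T : α → α) : Prop :=
  ∀ U V : Set α, IsOpen U → U.Nonempty → IsOpen V → V.Nonempty →
    {n : ℕ | (U ∩ T^[n] ⁻¹' V).Nonempty}.Infinite

/-- Weak mixing: the product system is transitive. -/
def IsWeaklyMixing {α : Type*} [TopologicalSpace α] (T : α → α) : Prop :=
  IsTransitive (Prod.map T T)

/-- Total transitivity. -/
def IsTotallyTransitive {α : Type*} [TopologicalSpace α] (T : α → α) : Prop :=
  ∀ n : ℕ, 0 < n → IsTransitive (T^[n])

/-- A minimal point: its orbit closure is a minimal subsystem. -/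
def IsMinimalPoint {α : Type*} [TopologicalSpace α] (T : α → α) (x : α) : Prop :=
  ∀ Y : Set α, Y.Nonempty → IsClosed Y → MapsTo T Y Y → Y ⊆ orbitClosure T x →
    Y = orbitClosure T x

def IsPeriodicPoint {α : Type*} (T : α → α) (x : α) : Prop :=
  ∃ n : ℕ, 0 < n ∧ T^[n] x = x

def IsPeriodicSystem {α : Type*} (T : α → α) : Prop :=
  ∃ m : ℕ, 0 < m ∧ T^[m] = id

def IsPointwisePeriodic {α : Type*} (T : α → α) : Prop :=
  ∀ x : α, IsPeriodicPoint T x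

def IsMSystem {α : Type*} [TopologicalSpace α] (T : α → α) : Prop :=
  IsTransitive T ∧ Dense {x : α | IsMinimalPoint T x}

def IsPSystem {α : Type*} [TopologicalSpace α] (T : α → α) : Prop :=
  IsTransitive T ∧ Dense {x : α | IsPeriodicPoint T x}

/-- An E-system: transitive with an invariant (Borel) probability measure of full support. -/
def IsESystem {α : Type*} [TopologicalSpace α] (T : α → α) : Prop :=
  IsTransitive T ∧
    let _i : MeasurableSpace α := borel α
    ∃ μ : Measure α, IsProbabilityMeasure μ ∧ μ.map T = μ ∧
      ∀ U : Set α, IsOpen U → U.Nonempty → 0 < μ U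

/-- A proximal pair: the orbit closure of `(x, y)` meets the diagonal. -/
def IsProximalPair {α : Type*} [TopologicalSpace α] (T : α → α) (x y : α) : Prop :=
  ∃ z : α, (z, z) ∈ closure (Set.range fun n : ℕ => (T^[n] x, T^[n] y))

def IsDistalPoint {α : Type*} [TopologicalSpace α] (T : α → α) (x : α) : Prop :=
  ∀ y ∈ orbitClosure T x, IsProximalPair T x y → y = x

def IsDistalSystem {α : Type*} [TopologicalSpace α] (T : α → α) : Prop :=
  ∀ x y : α, IsProximalPair T x y → x = y

/-- The induced map on the hyperspace of non-empty compact (= closed) subsets. -/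
def TK {α : Type*} [TopologicalSpace α] (T : α → α) (hT : Continuous T)
    (C : NonemptyCompacts α) : NonemptyCompacts α :=
  ⟨⟨T '' (C : Set α), C.isCompact.image hT⟩, C.nonempty.image T⟩

/-- The induced map on the space of Borel probability measures. -/
def TM {α : Type*} [TopologicalSpace α] [MeasurableSpace α] [BorelSpace α] (T : α → α)
    (hT : Continuous T) (μ : ProbabilityMeasure α) : ProbabilityMeasure α :=
  μ.map hT.measurable.aemeasurable

/-- Almost dense periodic sets. -/
def AlmostDensePeriodicSets {α : Type*} [TopologicalSpace α] (T : α → α) : Prop :=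
  let _i : MeasurableSpace α := borel α
  ∀ U : Set α, IsOpen U → U.Nonempty → ∀ ε : ℝ, 0 < ε →
    ∃ k : ℕ, 0 < k ∧ ∃ μ : Measure α, IsProbabilityMeasure μ ∧ μ.map (T^[k]) = μ ∧
      μ Uᶜ < ENNReal.ofReal ε

def IsAlmostHYSystem {α : Type*} [TopologicalSpace α] (T : α → α) : Prop :=
  IsTotallyTransitive T ∧ AlmostDensePeriodicSets T

def IsFactorMap {α β : Type*} [TopologicalSpace α] [TopologicalSpace β]
    (T : α → α) (S : β → β) (π : α → β) : Prop :=
  Continuous π ∧ Surjective π ∧ π ∘ T = S ∘ π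

def IsJoining {α β : Type*} [TopologicalSpace α] [TopologicalSpace β]
    (T : α → α) (S : β → β) (J : Set (α × β)) : Prop :=
  J.Nonempty ∧ IsClosed J ∧ MapsTo (Prod.map T S) J J ∧
    Prod.fst '' J = Set.univ ∧ Prod.snd '' J = Set.univ

def AreDisjoint {α β : Type*} [TopologicalSpace α] [TopologicalSpace β]
    (T : α → α) (S : β → β) : Prop :=
  ∀ J : Set (α × β), IsJoining T S J → J = Set.univ

def IsMinimalSystem {β : Type*} [TopologicalSpace β] (S : β → β) : Prop :=
  ∀ Y : Set β, Y.Nonempty → IsClosed Y → MapsTo S Y Y → Y = Set.univ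

/-- Disjoint from every minimal system (on a compact metric space). -/
def DisjointFromAllMinimal {α : Type*} [TopologicalSpace α] (T : α → α) : Prop :=
  ∀ (β : Type) (_ : MetricSpace β) (_ : CompactSpace β) (S : β → β),
    Continuous S → Surjective S → IsMinimalSystem S → AreDisjoint T S


open Metric
open scoped ENNReal NNReal BoundedContinuousFunction

lemma count_approx {ι : Type} [Fintype ι] [Nonempty ι] (w : ι → ℝ) (hw0 : ∀ i, 0 ≤ w i)
    (hw1 : ∑ i, w i = 1) (δ : ℝ) (hδ : 0 < δ) :
    ∃ (n : ℕ) (c : ι → ℕ), ∑ i, c i = n + 1 ∧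
      ∀ i, |(c i : ℝ) / (n + 1) - w i| ≤ δ := by
  classical
  obtain ⟨N, hN⟩ := exists_nat_gt ((Fintype.card ι : ℝ) / δ)
  set m : ℕ := N + 1 with hm
  have hmN : m = N + 1 := hm
  have hmpos : 0 < m := hm ▸ Nat.succ_pos N
  clear_value m
  have hm0 : (0 : ℝ) < m := by exact_mod_cast hmpos
  have hcard : (Fintype.card ι : ℝ) / m ≤ δ := by
    have h1 : ((Fintype.card ι : ℝ) / δ) * δ < N * δ := mul_lt_mul_of_pos_right hN hδ
    rw [div_mul_cancel₀ _ (ne_of_gt hδ)] at h1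
    rw [div_le_iff₀ hm0]
    have h2 : (N : ℝ) ≤ m := by rw [hmN]; push_cast; linarith
    nlinarith
  obtain ⟨i₀⟩ := ‹Nonempty ι›
  set S : ℕ := ∑ i ∈ Finset.univ.erase i₀, ⌊w i * m⌋₊ with hS
  have hfloor_le : ∀ i, (⌊w i * m⌋₊ : ℝ) ≤ w i * m := fun i =>
    Nat.floor_le (mul_nonneg (hw0 i) (le_of_lt hm0))
  have hfloor_gt : ∀ i, w i * m - 1 < (⌊w i * m⌋₊ : ℝ) := fun i =>
    sub_lt_iff_lt_add.2 (Nat.lt_floor_add_one _)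
  have hSle : S ≤ m := by
    have h1 : (S : ℝ) ≤ ∑ i ∈ Finset.univ.erase i₀, w i * m := by
      rw [hS]
      push_cast
      exact Finset.sum_le_sum fun i _ => hfloor_le i
    have h2 : ∑ i ∈ Finset.univ.erase i₀, w i * m ≤ (m : ℝ) := by
      rw [← Finset.sum_mul]
      have h3 : ∑ i ∈ Finset.univ.erase i₀, w i ≤ 1 := by
        rw [← hw1]
        exact Finset.sum_le_sum_of_subset_of_nonneg (Finset.erase_subset _ _)
          (fun i _ _ => hw0 i)
      nlinarith
    exact_mod_cast h1.trans h2
  set c : ι → ℕ := fun i => if i = i₀ then m - S else ⌊w i * m⌋₊ with hc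
  have hcsum : ∑ i, c i = m := by
    rw [← Finset.add_sum_erase _ c (Finset.mem_univ i₀)]
    have h1 : ∑ i ∈ Finset.univ.erase i₀, c i = S := by
      refine Finset.sum_congr rfl fun i hi => ?_
      rw [hc]
      simp only [Finset.mem_erase] at hi
      simp [hi.1]
    rw [h1, hc]
    simp [Nat.sub_add_cancel hSle]
  have herr' : ∀ i, 0 ≤ w i - (⌊w i * m⌋₊ : ℝ) / m ∧
      w i - (⌊w i * m⌋₊ : ℝ) / m ≤ 1 / (m : ℝ) := by
    intro i
    constructor
    · rw [sub_nonneg, div_le_iff₀ hm0]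
      exact hfloor_le i
    · rw [sub_le_iff_le_add, ← add_div, le_div_iff₀ hm0]
      have := hfloor_gt i
      linarith
  obtain ⟨n, hn⟩ : ∃ n : ℕ, m = n + 1 := ⟨N, hmN⟩
  refine ⟨n, c, by rw [hcsum, hn], ?_⟩
  have hmNR : ((n : ℝ) + 1) = (m : ℝ) := by rw [hn]; push_cast; ring
  intro i
  rw [hmNR]
  by_cases hi : i = i₀
  · subst hi
    have hci : (c i : ℝ) = (m : ℝ) - S := by
      rw [hc]; simp only [if_pos rfl]
      push_cast [Nat.cast_sub hSle]
      ring
    have hwsum : ∑ j ∈ Finset.univ.erase i, w j = 1 - w i := by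
      rw [← hw1, ← Finset.add_sum_erase _ w (Finset.mem_univ i)]
      ring
    have hSR : (S : ℝ) = ∑ j ∈ Finset.univ.erase i, (⌊w j * m⌋₊ : ℝ) := by
      rw [hS]; push_cast; rfl
    have e1 : ∑ j ∈ Finset.univ.erase i, (w j - (⌊w j * m⌋₊ : ℝ) / m)
        = (1 - w i) - (S : ℝ) / m := by
      rw [Finset.sum_sub_distrib, ← Finset.sum_div, ← hSR, hwsum]
    have e2 : (c i : ℝ) / m - w i = (1 - w i) - (S : ℝ) / m := by
      rw [hci, sub_div, div_self (ne_of_gt hm0)]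
      ring
    have hkey : (c i : ℝ) / m - w i
        = ∑ j ∈ Finset.univ.erase i, (w j - (⌊w j * m⌋₊ : ℝ) / m) := by
      rw [e1, e2]
    rw [hkey, abs_of_nonneg (Finset.sum_nonneg fun j _ => (herr' j).1)]
    have hcard1 : ((Finset.univ.erase i).card : ℝ) ≤ (Fintype.card ι : ℝ) := by
      exact_mod_cast Finset.card_le_card (Finset.subset_univ _)
    calc ∑ j ∈ Finset.univ.erase i, (w j - (⌊w j * m⌋₊ : ℝ) / m)
        ≤ ∑ _j ∈ Finset.univ.erase i, (1 : ℝ) / (m : ℝ) :=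
          Finset.sum_le_sum fun j _ => (herr' j).2
      _ = ((Finset.univ.erase i).card : ℝ) * ((1 : ℝ) / (m : ℝ)) := by
          rw [Finset.sum_const, nsmul_eq_mul]
      _ ≤ (Fintype.card ι : ℝ) * ((1 : ℝ) / (m : ℝ)) :=
          mul_le_mul_of_nonneg_right hcard1 (by positivity)
      _ = (Fintype.card ι : ℝ) / m := by ring
      _ ≤ δ := hcard
  · have hci : (c i : ℝ) = (⌊w i * m⌋₊ : ℝ) := by rw [hc]; simp [hi]
    rw [hci, abs_sub_comm, abs_of_nonneg (herr' i).1]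
    have h9 : (1 : ℝ) ≤ (Fintype.card ι : ℝ) := by exact_mod_cast Fintype.card_pos
    calc w i - (⌊w i * m⌋₊ : ℝ) / m ≤ 1 / (m : ℝ) := (herr' i).2
      _ ≤ (Fintype.card ι : ℝ) / m := by gcongr
      _ ≤ δ := hcard

lemma exists_fun_of_counts {ι : Type} [Fintype ι] (c : ι → ℕ) {n : ℕ}
    (h : ∑ i, c i = n + 1) :
    ∃ σ : Fin (n + 1) → ι, ∀ {E : Type*} [AddCommMonoid E] (f : ι → E),
      ∑ j, f (σ j) = ∑ i, c i • f i := by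
  have h1 : Fintype.card (Σ i : ι, Fin (c i)) = n + 1 := by
    rw [Fintype.card_sigma]
    simpa using h
  set e := Fintype.equivFin (Σ i : ι, Fin (c i)) with he
  refine ⟨fun j => (e.symm (Fin.cast h1.symm j)).1, ?_⟩
  intro E _ f
  have h2 : ∑ j : Fin (n + 1), f ((e.symm (Fin.cast h1.symm j)).1)
      = ∑ j : Fin (Fintype.card (Σ i : ι, Fin (c i))), f ((e.symm j).1) := by
    apply Fintype.sum_equiv (finCongr h1.symm)
    intro j
    rfl
  rw [h2]
  have h3 : ∑ j : Fin (Fintype.card (Σ i : ι, Fin (c i))), f ((e.symm j).1)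
      = ∑ p : (Σ i : ι, Fin (c i)), f p.1 := Equiv.sum_comp e.symm (fun p => f p.1)
  rw [h3, ← Finset.univ_sigma_univ, Finset.sum_sigma]
  exact Finset.sum_congr rfl fun i _ => by simp

lemma approx_combo {E : Type*} [NormedAddCommGroup E] [NormedSpace ℝ E] {ι : Type} [Fintype ι]
    (w : ι → ℝ) (v : ι → E) (hw0 : ∀ i, 0 ≤ w i) (hw1 : ∑ i, w i = 1) (ε : ℝ) (hε : 0 < ε) :
    ∃ (n : ℕ) (σ : Fin (n + 1) → ι),
      ‖(((n : ℝ) + 1))⁻¹ • (∑ j, v (σ j)) - ∑ i, w i • v i‖ < ε := by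
  have hne : Nonempty ι := by
    by_contra h
    rw [not_nonempty_iff] at h
    rw [Finset.sum_eq_zero (fun i _ => (h.elim i))] at hw1
    norm_num at hw1
  set B : ℝ := ∑ i, ‖v i‖ with hB
  have hB0 : 0 ≤ B := Finset.sum_nonneg fun i _ => norm_nonneg _
  set δ : ℝ := ε / (B + 1) with hδdef
  have hδ : 0 < δ := by positivity
  obtain ⟨n, c, hsum, herr⟩ := count_approx w hw0 hw1 δ hδ
  obtain ⟨σ, hσ⟩ := exists_fun_of_counts c hsum
  refine ⟨n, σ, ?_⟩
  have h1 : (((n : ℝ) + 1))⁻¹ • (∑ j, v (σ j)) = ∑ i, ((c i : ℝ) / (n + 1)) • v i := by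
    rw [hσ v, Finset.smul_sum]
    refine Finset.sum_congr rfl fun i _ => ?_
    rw [← Nat.cast_smul_eq_nsmul ℝ, smul_smul, div_eq_inv_mul]
  rw [h1, ← Finset.sum_sub_distrib]
  have h2 : ∀ i, ((c i : ℝ) / (n + 1)) • v i - w i • v i
      = ((c i : ℝ) / (n + 1) - w i) • v i := fun i => (sub_smul _ _ _).symm
  calc ‖∑ i, (((c i : ℝ) / (n + 1)) • v i - w i • v i)‖
      ≤ ∑ i, ‖((c i : ℝ) / (n + 1)) • v i - w i • v i‖ := norm_sum_le _ _
    _ = ∑ i, |(c i : ℝ) / (n + 1) - w i| * ‖v i‖ := by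
        refine Finset.sum_congr rfl fun i _ => ?_
        rw [h2 i, norm_smul, Real.norm_eq_abs]
    _ ≤ ∑ i, δ * ‖v i‖ := Finset.sum_le_sum fun i _ =>
        mul_le_mul_of_nonneg_right (herr i) (norm_nonneg _)
    _ = δ * B := by rw [← Finset.mul_sum]
    _ < δ * (B + 1) := by nlinarith
    _ = ε := by rw [hδdef]; field_simp


/-- Key lemma: if `(α,Tα)` is disjoint from the minimal system `(β,S)` and `π : α → γ`
is continuous and equivariant, then any joining-like set `J` of `(γ,R)` and `(β,S)`
contains `range π × univ`. -/
lemma key_joining {α β γ : Type*} [TopologicalSpace α] [TopologicalSpace β] [TopologicalSpace γ]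
    [CompactSpace α] [CompactSpace β] [T2Space β] [T2Space γ]
    (Tα : α → α) (S : β → β) (R : γ → γ) (π : α → γ) (hπc : Continuous π)
    (hcomm : ∀ x, π (Tα x) = R (π x)) (hd : AreDisjoint Tα S) (hmin : IsMinimalSystem S)
    (J : Set (γ × β)) (hJcl : IsClosed J) (hJinv : MapsTo (Prod.map R S) J J)
    (hJ1 : Prod.fst '' J = Set.univ) (x : α) (y : β) : (π x, y) ∈ J := by
  set A : Set γ := Set.range π with hA
  have hAcomp : IsCompact A := isCompact_range hπc
  set E : Set β := Prod.snd '' (J ∩ A ×ˢ (Set.univ : Set β)) with hE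
  have hEne : E.Nonempty := by
    have : π x ∈ Prod.fst '' J := hJ1 ▸ Set.mem_univ _
    obtain ⟨p, hp, hpe⟩ := this
    exact ⟨p.2, p, ⟨hp, ⟨hpe ▸ ⟨x, rfl⟩, Set.mem_univ _⟩⟩, rfl⟩
  have hEcl : IsClosed E := by
    have hcomp : IsCompact (J ∩ A ×ˢ (Set.univ : Set β)) :=
      (hAcomp.prod isCompact_univ).inter_left hJcl
    exact (hcomp.image continuous_snd).isClosed
  have hEinv : MapsTo S E E := by
    rintro b ⟨p, ⟨hpJ, ⟨⟨x', hx'⟩, -⟩⟩, rfl⟩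
    refine ⟨(R p.1, S p.2), ⟨hJinv hpJ, ⟨⟨Tα x', by rw [hcomm, hx']⟩, Set.mem_univ _⟩⟩, rfl⟩
  have hEuniv : E = Set.univ := hmin E hEne hEcl hEinv
  set J' : Set (α × β) := (fun p : α × β => (π p.1, p.2)) ⁻¹' J with hJ'
  have hmem : ∀ b : β, ∃ a : α, (π a, b) ∈ J := by
    intro b
    have : b ∈ E := hEuniv ▸ Set.mem_univ b
    obtain ⟨p, ⟨hpJ, ⟨⟨a, ha⟩, -⟩⟩, rfl⟩ := this
    exact ⟨a, by rw [ha]; simpa using hpJ⟩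
  have hJ'join : IsJoining Tα S J' := by
    refine ⟨?_, hJcl.preimage ((hπc.comp continuous_fst).prodMk continuous_snd), ?_, ?_, ?_⟩
    · obtain ⟨a, ha⟩ := hmem y
      exact ⟨(a, y), ha⟩
    · rintro ⟨a, b⟩ hab
      have : (π (Tα a), S b) ∈ J := by
        rw [hcomm]
        exact hJinv hab
      exact this
    · rw [Set.eq_univ_iff_forall]
      intro a
      have : π a ∈ Prod.fst '' J := hJ1 ▸ Set.mem_univ _
      obtain ⟨p, hp, hpe⟩ := this
      refine ⟨(a, p.2), ?_, rfl⟩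
      show (π a, p.2) ∈ J
      rw [← hpe]; simpa using hp
    · rw [Set.eq_univ_iff_forall]
      intro b
      obtain ⟨a, ha⟩ := hmem b
      exact ⟨(a, b), ha, rfl⟩
  have := hd J' hJ'join
  have hxy : (x, y) ∈ J' := this ▸ Set.mem_univ _
  exact hxy


section Aux

set_option linter.unusedSectionVars false
variable {X : Type*} [MetricSpace X] [CompactSpace X]


@[simp] lemma TK_coe (T : X → X) (hT : Continuous T) (C : NonemptyCompacts X) :
    ((TK T hT C : NonemptyCompacts X) : Set X) = T '' (C : Set X) := rfl

lemma TK_iterate_coe (T : X → X) (hT : Continuous T) (n : ℕ) (C : NonemptyCompacts X) :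
    (((TK T hT)^[n] C : NonemptyCompacts X) : Set X) = T^[n] '' (C : Set X) := by
  induction n generalizing C with
  | zero => simp
  | succ n ih =>
    rw [Function.iterate_succ_apply, ih, TK_coe, ← Set.image_comp,
      ← Function.iterate_succ]

/-- the singleton as a NonemptyCompacts -/
def sing (x : X) : NonemptyCompacts X := ⟨⟨{x}, isCompact_singleton⟩, ⟨x, rfl⟩⟩

@[simp] lemma sing_coe (x : X) : ((sing x : NonemptyCompacts X) : Set X) = {x} := rfl

/-- membership set is closed -/
lemma isClosed_memSet :
    IsClosed {p : X × NonemptyCompacts X | p.1 ∈ (p.2 : Set X)} := by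
  have hc : Continuous fun p : X × NonemptyCompacts X => infDist p.1 (p.2 : Set X) :=
    Metric.lipschitz_infDist.continuous
  have : {p : X × NonemptyCompacts X | p.1 ∈ (p.2 : Set X)}
      = (fun p : X × NonemptyCompacts X => infDist p.1 (p.2 : Set X)) ⁻¹' {0} := by
    ext p
    simp only [Set.mem_setOf_eq, Set.mem_preimage, Set.mem_singleton_iff]
    rw [← p.2.isCompact.isClosed.mem_iff_infDist_zero p.2.nonempty]
  rw [this]
  exact isClosed_singleton.preimage hc

lemma isOpen_subsets {U : Set X} (hU : IsOpen U) :
    IsOpen {C : NonemptyCompacts X | (C : Set X) ⊆ U} := by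
  rw [← isClosed_compl_iff]
  have : {C : NonemptyCompacts X | (C : Set X) ⊆ U}ᶜ
      = Prod.snd '' ({p : X × NonemptyCompacts X | p.1 ∈ (p.2 : Set X)} ∩ (Prod.fst ⁻¹' Uᶜ)) := by
    ext C
    simp only [Set.mem_compl_iff, Set.mem_setOf_eq, Set.mem_image, Set.mem_inter_iff,
      Set.mem_preimage, Set.not_subset]
    constructor
    · rintro ⟨x, hx, hxU⟩; exact ⟨(x, C), ⟨hx, hxU⟩, rfl⟩
    · rintro ⟨⟨x, D⟩, ⟨hx, hxU⟩, rfl⟩; exact ⟨x, hx, hxU⟩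
  rw [this]
  exact isClosedMap_snd_of_compactSpace _
    (isClosed_memSet.inter (hU.isClosed_compl.preimage continuous_fst))


lemma wm_of_wm_TK (T : X → X) (hT : Continuous T) (h : IsWeaklyMixing (TK T hT)) :
    IsWeaklyMixing T := by
  intro U V hU hUne hV hVne
  obtain ⟨⟨a, b⟩, hab⟩ := hUne
  obtain ⟨⟨c, d⟩, hcd⟩ := hVne
  obtain ⟨U1, U2, hU1, hU2, ha, hb, hUsub⟩ := isOpen_prod_iff.1 hU a b hab
  obtain ⟨V1, V2, hV1, hV2, hc, hd, hVsub⟩ := isOpen_prod_iff.1 hV c d hcd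
  have key := h ({C : NonemptyCompacts X | (C : Set X) ⊆ U1} ×ˢ
      {C : NonemptyCompacts X | (C : Set X) ⊆ U2})
    ({C : NonemptyCompacts X | (C : Set X) ⊆ V1} ×ˢ
      {C : NonemptyCompacts X | (C : Set X) ⊆ V2})
    ((isOpen_subsets hU1).prod (isOpen_subsets hU2))
    ⟨(sing a, sing b), by simp [ha, hb]⟩
    ((isOpen_subsets hV1).prod (isOpen_subsets hV2))
    ⟨(sing c, sing d), by simp [hc, hd]⟩
  refine key.mono ?_
  rintro n ⟨⟨C, D⟩, ⟨hCU, hDU⟩, hn⟩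
  rw [Set.mem_preimage, Prod.map_iterate] at hn
  obtain ⟨hCV, hDV⟩ := hn
  obtain ⟨x, hx⟩ := C.nonempty
  obtain ⟨y, hy⟩ := D.nonempty
  refine ⟨(x, y), hUsub ⟨hCU hx, hDU hy⟩, ?_⟩
  rw [Set.mem_preimage, Prod.map_iterate]
  have hxV : T^[n] x ∈ V1 := by
    have h2 : ((((TK T hT)^[n]) C : NonemptyCompacts X) : Set X) ⊆ V1 := hCV
    rw [TK_iterate_coe] at h2
    exact h2 ⟨x, hx, rfl⟩
  have hyV : T^[n] y ∈ V2 := by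
    have h2 : ((((TK T hT)^[n]) D : NonemptyCompacts X) : Set X) ⊆ V2 := hDV
    rw [TK_iterate_coe] at h2
    exact h2 ⟨y, hy, rfl⟩
  exact hVsub ⟨hxV, hyV⟩

lemma dfm_of_dfm_TK (T : X → X) (hT : Continuous T)
    (h : DisjointFromAllMinimal (TK T hT)) : DisjointFromAllMinimal T := by
  intro β iβ1 iβ2 S hSc hSs hSmin J hJ
  obtain ⟨hJne, hJcl, hJinv, hJ1, hJ2⟩ := hJ
  set J' : Set (NonemptyCompacts X × β) :=
    {p | ∃ x ∈ (p.1 : Set X), (x, p.2) ∈ J} with hJ'def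
  have hJ'cl : IsClosed J' := by
    have : J' = Prod.snd ''
        ({q : X × (NonemptyCompacts X × β) | q.1 ∈ (q.2.1 : Set X)} ∩
          ((fun q : X × (NonemptyCompacts X × β) => (q.1, q.2.2)) ⁻¹' J)) := by
      ext ⟨C, y⟩
      constructor
      · rintro ⟨x, hx, hxy⟩; exact ⟨(x, (C, y)), ⟨hx, hxy⟩, rfl⟩
      · rintro ⟨⟨x, p⟩, ⟨hx, hxy⟩, heq⟩; cases heq; exact ⟨x, hx, hxy⟩
    rw [this]
    refine isClosedMap_snd_of_compactSpace _ ?_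
    have h1 : IsClosed {q : X × (NonemptyCompacts X × β) | q.1 ∈ (q.2.1 : Set X)} :=
      isClosed_memSet.preimage (continuous_fst.prodMk (continuous_fst.comp continuous_snd))
    exact h1.inter (hJcl.preimage (continuous_fst.prodMk (continuous_snd.comp continuous_snd)))
  have hJ'join : IsJoining (TK T hT) S J' := by
    refine ⟨?_, hJ'cl, ?_, ?_, ?_⟩
    · obtain ⟨⟨x, y⟩, hxy⟩ := hJne
      exact ⟨(sing x, y), x, by simp, hxy⟩
    · rintro ⟨C, y⟩ ⟨x, hx, hxy⟩
      exact ⟨T x, ⟨x, hx, rfl⟩, hJinv hxy⟩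
    · rw [Set.eq_univ_iff_forall]
      intro C
      obtain ⟨x, hx⟩ := C.nonempty
      have hm : x ∈ Prod.fst '' J := hJ1 ▸ Set.mem_univ x
      obtain ⟨p, hp, hpe⟩ := hm
      refine ⟨(C, p.2), ⟨x, hx, ?_⟩, rfl⟩
      rw [← hpe]; simpa using hp
    · rw [Set.eq_univ_iff_forall]
      intro y
      have hm : y ∈ Prod.snd '' J := hJ2 ▸ Set.mem_univ y
      obtain ⟨p, hp, hpe⟩ := hm
      refine ⟨(sing p.1, y), ⟨p.1, by simp, ?_⟩, rfl⟩
      rw [← hpe]; simpa using hp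
  have := h β iβ1 iβ2 S hSc hSs hSmin J' hJ'join
  rw [Set.eq_univ_iff_forall]
  rintro ⟨x, y⟩
  have hx : (sing x, y) ∈ J' := this ▸ Set.mem_univ _
  obtain ⟨x', hx', hxy⟩ := hx
  rw [sing_coe, Set.mem_singleton_iff] at hx'
  exact hx' ▸ hxy


/-- The finite-set map `Xⁿ → K(X)`. -/
def piK {n : ℕ} (x : Fin (n + 1) → X) : NonemptyCompacts X :=
  ⟨⟨Set.range x, (Set.finite_range x).isCompact⟩, Set.range_nonempty x⟩

@[simp] lemma piK_coe {n : ℕ} (x : Fin (n + 1) → X) :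
    ((piK x : NonemptyCompacts X) : Set X) = Set.range x := rfl

lemma piK_continuous {n : ℕ} : Continuous (piK : (Fin (n + 1) → X) → NonemptyCompacts X) := by
  rw [Metric.continuous_iff]
  intro a ε hε
  refine ⟨ε, hε, fun b hb => ?_⟩
  have hle : dist (piK b) (piK a) ≤ dist b a := by
    rw [NonemptyCompacts.dist_eq]
    refine Metric.hausdorffDist_le_of_mem_dist dist_nonneg ?_ ?_
    · rintro p ⟨i, rfl⟩
      exact ⟨a i, ⟨i, rfl⟩, dist_le_pi_dist b a i⟩
    · rintro q ⟨i, rfl⟩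
      exact ⟨b i, ⟨i, rfl⟩, by rw [dist_comm]; exact dist_le_pi_dist b a i⟩
  exact lt_of_le_of_lt hle hb

lemma piK_equivariant {n : ℕ} (T : X → X) (hT : Continuous T) (x : Fin (n + 1) → X) :
    piK (T ∘ x) = TK T hT (piK x) := by
  apply NonemptyCompacts.ext
  show Set.range (T ∘ x) = T '' Set.range x
  rw [Set.range_comp]

lemma dense_piK :
    Dense (⋃ n : ℕ, Set.range (piK : (Fin (n + 1) → X) → NonemptyCompacts X)) := by
  intro C
  rw [Metric.mem_closure_iff]
  intro ε hε
  have htb : TotallyBounded (C : Set X) := C.isCompact.totallyBounded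
  obtain ⟨t, hts, htf, htcov⟩ := totallyBounded_iff_subset.1 htb
    {p : X × X | dist p.1 p.2 < ε / 2} (Metric.dist_mem_uniformity (half_pos hε))
  have htne : t.Nonempty := by
    obtain ⟨x, hx⟩ := C.nonempty
    obtain ⟨y, hy, -⟩ := Set.mem_iUnion₂.1 (htcov hx)
    exact ⟨y, hy⟩
  obtain ⟨n, f, hf⟩ := htf.fin_embedding
  have hn : n ≠ 0 := by
    rintro rfl
    obtain ⟨y, hy⟩ := htne
    rw [← hf] at hy
    obtain ⟨i, -⟩ := hy
    exact i.elim0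
  obtain ⟨m, rfl⟩ := Nat.exists_eq_succ_of_ne_zero hn
  refine ⟨piK (⇑f), Set.mem_iUnion.2 ⟨m, ⟨⇑f, rfl⟩⟩, ?_⟩
  rw [NonemptyCompacts.dist_eq]
  have hle : hausdorffDist (C : Set X) (Set.range ⇑f) ≤ ε / 2 := by
    refine Metric.hausdorffDist_le_of_mem_dist (le_of_lt (half_pos hε)) ?_ ?_
    · intro p hp
      obtain ⟨y, hy, hd⟩ := Set.mem_iUnion₂.1 (htcov hp)
      exact ⟨y, hf ▸ hy, le_of_lt hd⟩
    · intro q hq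
      rw [hf] at hq
      exact ⟨q, hts hq, by simpa using (half_pos hε).le⟩
  calc hausdorffDist (C : Set X) ((piK ⇑f : NonemptyCompacts X) : Set X) ≤ ε / 2 := hle
    _ < ε := half_lt_self hε

lemma dfm_TK (T : X → X) (hT : Continuous T)
    (h : ∀ n : ℕ, 0 < n → DisjointFromAllMinimal (fun x : Fin n → X => T ∘ x)) :
    DisjointFromAllMinimal (TK T hT) := by
  intro β iβ1 iβ2 S hSc hSs hSmin J hJ
  obtain ⟨hJne, hJcl, hJinv, hJ1, hJ2⟩ := hJ
  have hkey : ∀ (n : ℕ) (x : Fin (n + 1) → X) (y : β), (piK x, y) ∈ J := by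
    intro n x y
    exact key_joining (fun v : Fin (n + 1) → X => T ∘ v) S (TK T hT) piK piK_continuous
      (fun v => piK_equivariant T hT v)
      (h (n + 1) (Nat.succ_pos n) β iβ1 iβ2 S hSc hSs hSmin) hSmin J hJcl hJinv hJ1 x y
  rw [Set.eq_univ_iff_forall]
  rintro ⟨C, y⟩
  have hCcl : (C, y) ∈ closure
      ((⋃ n : ℕ, Set.range (piK : (Fin (n + 1) → X) → NonemptyCompacts X)) ×ˢ {y}) := by
    rw [closure_prod_eq]
    exact ⟨dense_piK C, subset_closure rfl⟩
  refine hJcl.closure_subset (closure_mono ?_ hCcl)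
  rintro ⟨D, y'⟩ ⟨hD, rfl⟩
  obtain ⟨n, hn⟩ := Set.mem_iUnion.1 hD
  obtain ⟨x, rfl⟩ := hn
  exact hkey n x y'


variable [MeasurableSpace X] [BorelSpace X]

/-- The empirical-measure map `Xⁿ → M(X)`. -/
def piM {n : ℕ} (x : Fin (n + 1) → X) : ProbabilityMeasure X :=
  ⟨(((n : ℝ≥0∞) + 1))⁻¹ • ∑ i : Fin (n + 1), Measure.dirac (x i), by
    constructor
    rw [Measure.smul_apply, Measure.coe_finset_sum, smul_eq_mul]
    simp only [Finset.sum_apply, Measure.dirac_apply_of_mem (Set.mem_univ _)]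
    rw [Finset.sum_const, Finset.card_univ, Fintype.card_fin, nsmul_eq_mul, mul_one,
      Nat.cast_add, Nat.cast_one]
    exact ENNReal.inv_mul_cancel (by simp) (by simp)⟩

lemma piM_toMeasure {n : ℕ} (x : Fin (n + 1) → X) :
    (piM x : Measure X) = (((n : ℝ≥0∞) + 1))⁻¹ • ∑ i : Fin (n + 1), Measure.dirac (x i) := rfl

lemma piM_lintegral {n : ℕ} (x : Fin (n + 1) → X) (f : X → ℝ≥0∞) :
    ∫⁻ a, f a ∂(piM x : Measure X) = (((n : ℝ≥0∞) + 1))⁻¹ * ∑ i : Fin (n + 1), f (x i) := by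
  rw [piM_toMeasure, lintegral_smul_measure, lintegral_finset_sum_measure]
  congr 1
  exact Finset.sum_congr rfl fun i _ => lintegral_dirac _ f

lemma piM_test {n : ℕ} (x : Fin (n + 1) → X) (f : X →ᵇ ℝ≥0) :
    (piM x).toFiniteMeasure.testAgainstNN f
      = (((n : ℝ≥0) + 1))⁻¹ * ∑ i : Fin (n + 1), f (x i) := by
  have h1 : (piM x).toFiniteMeasure.testAgainstNN f
      = (∫⁻ a, (f a : ℝ≥0∞) ∂(piM x : Measure X)).toNNReal := rfl
  rw [h1, piM_lintegral]
  have : (((n : ℝ≥0∞) + 1))⁻¹ * ∑ i : Fin (n + 1), (f (x i) : ℝ≥0∞)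
      = ((((n : ℝ≥0) + 1))⁻¹ * ∑ i : Fin (n + 1), f (x i) : ℝ≥0) := by
    push_cast
    rw [ENNReal.coe_inv (by positivity)]
    push_cast
    ring
  rw [this, ENNReal.toNNReal_coe]

lemma piM_continuous {n : ℕ} : Continuous (piM : (Fin (n + 1) → X) → ProbabilityMeasure X) := by
  apply continuous_induced_rng.2
  apply continuous_induced_rng.2
  apply WeakBilin.continuous_of_continuous_eval
  intro f
  have key : ∀ x : Fin (n + 1) → X,
      (topDualPairing ℝ≥0 (X →ᵇ ℝ≥0))
        ((FiniteMeasure.toWeakDualBCNN ∘ ProbabilityMeasure.toFiniteMeasure ∘ piM) x) f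
      = (((n : ℝ≥0) + 1))⁻¹ * ∑ i : Fin (n + 1), f (x i) := fun x => piM_test x f
  simp only [key]
  exact (continuous_const.mul (continuous_finset_sum _ fun i _ =>
    f.continuous.comp (continuous_apply i)))

lemma piM_equivariant {n : ℕ} (T : X → X) (hT : Continuous T) (x : Fin (n + 1) → X) :
    piM (T ∘ x) = TM T hT (piM x) := by
  classical
  apply Subtype.ext
  show (piM (T ∘ x) : Measure X) = Measure.map T (piM x : Measure X)
  rw [piM_toMeasure, piM_toMeasure, Measure.map_smul]
  congr 1
  ext s hs
  rw [Measure.map_apply hT.measurable hs, Measure.coe_finset_sum, Measure.coe_finset_sum]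
  simp only [Finset.sum_apply]
  refine Finset.sum_congr rfl fun i _ => ?_
  rw [Measure.dirac_apply' _ (hT.measurable hs), Measure.dirac_apply' _ hs]
  rw [Set.indicator_apply, Set.indicator_apply, Set.mem_preimage]
  rfl


/-- integrability of continuous real functions on a compact space -/
lemma cont_integrable (μ : ProbabilityMeasure X) {g : X → ℝ} (hg : Continuous g) :
    Integrable g (μ : Measure X) :=
  hg.integrable_of_hasCompactSupport (isClosed_tsupport g).isCompact

/-- testAgainstNN as a Bochner integral -/
lemma test_eq_integral (μ : ProbabilityMeasure X) (f : X →ᵇ ℝ≥0) :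
    ((μ.toFiniteMeasure.testAgainstNN f : ℝ≥0) : ℝ) = ∫ x, (f x : ℝ) ∂(μ : Measure X) := by
  have hfi : Integrable (fun x => (f x : ℝ)) (μ : Measure X) :=
    cont_integrable μ (NNReal.continuous_coe.comp f.continuous)
  have h1 : (∫⁻ x, (f x : ℝ≥0∞) ∂(μ : Measure X))
      = ENNReal.ofReal (∫ x, (f x : ℝ) ∂(μ : Measure X)) :=
    lintegral_coe_eq_integral f hfi
  have h2 : μ.toFiniteMeasure.testAgainstNN f
      = (∫⁻ x, (f x : ℝ≥0∞) ∂(μ : Measure X)).toNNReal := rfl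
  rw [h2, h1, ENNReal.ofReal, ENNReal.toNNReal_coe]
  exact Real.coe_toNNReal _ (integral_nonneg fun x => (f x).coe_nonneg)

/-- density of empirical measures -/
lemma dense_piM [Nonempty X] :
    Dense (⋃ n : ℕ, Set.range (piM : (Fin (n + 1) → X) → ProbabilityMeasure X)) := by
  classical
  set A := ⋃ n : ℕ, Set.range (piM : (Fin (n + 1) → X) → ProbabilityMeasure X) with hA
  have hAne : ∀ (n : ℕ) (x : Fin (n+1) → X), piM x ∈ A := fun n x =>
    Set.mem_iUnion.2 ⟨n, ⟨x, rfl⟩⟩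
  -- the inducing map to the product space
  set Φ : ProbabilityMeasure X → ((X →ᵇ ℝ≥0) → ℝ≥0) :=
    fun μ => fun f => μ.toFiniteMeasure.testAgainstNN f with hΦ
  have hind : IsInducing Φ := by
    have h1 : IsInducing (ProbabilityMeasure.toFiniteMeasure :
        ProbabilityMeasure X → FiniteMeasure X) :=
      (ProbabilityMeasure.toFiniteMeasure_isEmbedding X).toIsInducing
    have h2 : IsInducing (FiniteMeasure.toWeakDualBCNN :
        FiniteMeasure X → WeakDual ℝ≥0 (X →ᵇ ℝ≥0)) :=
      (FiniteMeasure.isEmbedding_toWeakDualBCNN X).toIsInducing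
    have h3 : IsInducing (fun (φ : WeakDual ℝ≥0 (X →ᵇ ℝ≥0)) => (fun f => φ f)) := ⟨rfl⟩
    exact (h3.comp h2).comp h1
  -- the key approximation property
  have hkey : ∀ (I : Finset (X →ᵇ ℝ≥0)) (μ : ProbabilityMeasure X) (δ : ℝ), 0 < δ →
      ∃ ν ∈ A, ∀ f ∈ I, dist (Φ ν f) (Φ μ f) < δ := by
    intro I μ δ hδ
    by_cases hIe : I = ∅
    · subst hIe
      exact ⟨piM (fun _ => Classical.arbitrary X), hAne 0 _, by simp⟩
    -- the vector-valued function
    set E := (↥I → ℝ) with hE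
    set g : X → E := fun x => fun j => ((j : X →ᵇ ℝ≥0) x : ℝ) with hg
    have hgc : Continuous g :=
      continuous_pi fun j => NNReal.continuous_coe.comp (j : X →ᵇ ℝ≥0).continuous
    have hgi : Integrable g (μ : Measure X) :=
      hgc.integrable_of_hasCompactSupport (isClosed_tsupport g).isCompact
    set z : E := ∫ x, g x ∂(μ : Measure X) with hz
    have hzmem : z ∈ closure (convexHull ℝ (Set.range g)) := by
      have hconv : Convex ℝ (closure (convexHull ℝ (Set.range g))) :=
        (convex_convexHull ℝ _).closure
      have := hconv.average_mem isClosed_closure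
        (ae_of_all _ fun x => subset_closure (subset_convexHull ℝ _ ⟨x, rfl⟩)) hgi
      rwa [average_eq_integral] at this
    obtain ⟨wpt, hwmem, hwdist⟩ := Metric.mem_closure_iff.1 hzmem (δ/2) (by positivity)
    obtain ⟨ι, hι, w, v, hw0, hw1, hvmem, hcomb⟩ :=
      (mem_convexHull_iff_exists_fintype (R := ℝ) (E := E)).1 hwmem
    choose p hp using hvmem
    obtain ⟨n, σ, happrox⟩ := approx_combo w v hw0 hw1 (δ/2) (by positivity)
    set x : Fin (n + 1) → X := fun j => p (σ j) with hx
    refine ⟨piM x, hAne n x, ?_⟩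
    intro f hf
    -- the empirical vector
    set u : E := (((n : ℝ) + 1))⁻¹ • (∑ j, g (x j)) with hu
    have hueq : u = (((n : ℝ) + 1))⁻¹ • (∑ j, v (σ j)) := by
      rw [hu]
      congr 1
      exact Finset.sum_congr rfl fun j _ => by rw [hx, hp]
    have hud : ‖u - z‖ < δ := by
      have h1 : ‖u - wpt‖ < δ/2 := by
        rw [hueq, ← hcomb]
        exact happrox
      have h2 : ‖wpt - z‖ < δ/2 := by
        rw [← dist_eq_norm, dist_comm]
        exact hwdist
      have h3 := dist_triangle u wpt z
      rw [dist_eq_norm, dist_eq_norm, dist_eq_norm] at h3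
      linarith
    -- coordinatewise estimate
    have hcoord : |u ⟨f, hf⟩ - z ⟨f, hf⟩| < δ := by
      calc |u ⟨f, hf⟩ - z ⟨f, hf⟩| = ‖(u - z) ⟨f, hf⟩‖ := by
            rw [Pi.sub_apply, Real.norm_eq_abs]
        _ ≤ ‖u - z‖ := norm_le_pi_norm (u - z) ⟨f, hf⟩
        _ < δ := hud
    -- identify the coordinates
    have hu_coord : u ⟨f, hf⟩ = (((piM x).toFiniteMeasure.testAgainstNN f : ℝ≥0) : ℝ) := by
      rw [piM_test x f, hu]
      push_cast
      simp only [hg, Pi.smul_apply, Finset.sum_apply, smul_eq_mul]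
      rw [Pi.smul_apply, Finset.sum_apply, smul_eq_mul]
    have hz_coord : z ⟨f, hf⟩ = ((μ.toFiniteMeasure.testAgainstNN f : ℝ≥0) : ℝ) := by
      rw [test_eq_integral μ f]
      have h6 := (ContinuousLinearMap.proj (R := ℝ) (φ := fun _ : ↥I => ℝ)
        (⟨f, hf⟩ : ↥I)).integral_comp_comm hgi
      calc z ⟨f, hf⟩
          = (ContinuousLinearMap.proj (R := ℝ) (φ := fun _ : ↥I => ℝ) (⟨f, hf⟩ : ↥I)) z := rfl
        _ = ∫ a, (ContinuousLinearMap.proj (R := ℝ) (φ := fun _ : ↥I => ℝ) (⟨f, hf⟩ : ↥I)) (g a)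
              ∂(μ : Measure X) := by rw [hz, h6]
        _ = ∫ a, ((f a : ℝ)) ∂(μ : Measure X) := integral_congr_ae (ae_of_all _ fun a => rfl)
    rw [NNReal.dist_eq]
    simp only [hΦ]
    rw [← hu_coord, ← hz_coord]
    exact hcoord
  -- now conclude density
  intro μ
  rw [hind.closure_eq_preimage_closure_image, Set.mem_preimage, _root_.mem_closure_iff]
  intro O hO hμO
  obtain ⟨I, u, hu, hsub⟩ := isOpen_pi_iff.1 hO (Φ μ) hμO
  -- radii for each coordinate
  have hball : ∀ f ∈ I, ∃ r : ℝ, 0 < r ∧ Metric.ball (Φ μ f) r ⊆ u f := fun f hf =>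
    Metric.isOpen_iff.1 (hu f hf).1 _ (hu f hf).2
  choose! r hrpos hrball using hball
  by_cases hIe : I = ∅
  · subst hIe
    obtain ⟨ν, hν, -⟩ := hkey ∅ μ 1 one_pos
    exact ⟨Φ ν, hsub (by simp), Set.mem_image_of_mem Φ hν⟩
  have hIne : I.Nonempty := Finset.nonempty_iff_ne_empty.2 hIe
  set δ : ℝ := I.inf' hIne r with hδdef
  have hδpos : 0 < δ := by
    rw [hδdef, Finset.lt_inf'_iff]
    exact fun f hf => hrpos f hf
  obtain ⟨ν, hν, hνd⟩ := hkey I μ δ hδpos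
  refine ⟨Φ ν, hsub ?_, Set.mem_image_of_mem Φ hν⟩
  intro f hf
  apply hrball f hf
  rw [Metric.mem_ball]
  exact lt_of_lt_of_le (hνd f hf) (Finset.inf'_le r hf)



lemma dfm_TM (T : X → X) (hT : Continuous T)
    (h : ∀ n : ℕ, 0 < n → DisjointFromAllMinimal (fun x : Fin n → X => T ∘ x)) :
    DisjointFromAllMinimal (TM T hT) := by
  intro β iβ1 iβ2 S hSc hSs hSmin J hJ
  obtain ⟨hJne, hJcl, hJinv, hJ1, hJ2⟩ := hJ
  obtain ⟨⟨μ0, y0⟩, -⟩ := hJne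
  have hXne : Nonempty X := by
    by_contra hX
    rw [not_nonempty_iff] at hX
    have h1 : (μ0 : Measure X) Set.univ = 1 := measure_univ
    rw [Set.univ_eq_empty_iff.2 hX, measure_empty] at h1
    simp at h1
  have hkey : ∀ (n : ℕ) (x : Fin (n + 1) → X) (y : β), (piM x, y) ∈ J := by
    intro n x y
    exact key_joining (fun v : Fin (n + 1) → X => T ∘ v) S (TM T hT) piM piM_continuous
      (fun v => piM_equivariant T hT v)
      (h (n + 1) (Nat.succ_pos n) β iβ1 iβ2 S hSc hSs hSmin) hSmin J hJcl hJinv hJ1 x y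
  rw [Set.eq_univ_iff_forall]
  rintro ⟨μ, y⟩
  have hCcl : (μ, y) ∈ closure
      ((⋃ n : ℕ, Set.range (piM : (Fin (n + 1) → X) → ProbabilityMeasure X)) ×ˢ {y}) := by
    rw [closure_prod_eq]
    exact ⟨dense_piM μ, subset_closure rfl⟩
  refine hJcl.closure_subset (closure_mono ?_ hCcl)
  rintro ⟨ν, y'⟩ ⟨hD, rfl⟩
  obtain ⟨n, hn⟩ := Set.mem_iUnion.1 hD
  obtain ⟨x, rfl⟩ := hn
  exact hkey n x y'

end Aux


theorem disjointness_and_induced_systems {X : Type*}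
    [MetricSpace X] [CompactSpace X] [MeasurableSpace X] [BorelSpace X]
    (T : X → X) (hT : Continuous T) (hTs : Surjective T) :
    ((IsWeaklyMixing (TK T hT) ∧ DisjointFromAllMinimal (TK T hT)) →
      (IsWeaklyMixing T ∧ DisjointFromAllMinimal T)) ∧
    ((∀ n : ℕ, 0 < n → DisjointFromAllMinimal (fun x : Fin n → X => T ∘ x)) →
      (DisjointFromAllMinimal (TK T hT) ∧ DisjointFromAllMinimal (TM T hT))) := by
  constructor
  · rintro ⟨hwm, hdfm⟩
    exact ⟨wm_of_wm_TK T hT hwm, dfm_of_dfm_TK T hT hdfm⟩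
  · intro hyp
    exact ⟨dfm_TK T hT hyp, dfm_TM T hT hyp⟩


end Paper
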